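/- For infinitely many integers t, the value 27t^2 + 9t + 1 is squarefree; in particular, there are infinitely many integers a ≡ 3 (mod 27) such that (a^2 + 3a + 9)/27 is squarefree. -/

import Mathlib

open Finset

private lemma fpos (t : ℤ) : 0 < 27*t^2+9*t+1 := by nlinarith [sq_nonneg (18*t+3)]

private lemma h18 (p : ℕ) (hp : p.Prime) (h5 : 5 ≤ p) : ¬ (p ∣ 18) := by
  intro hd
  have hle := Nat.le_of_dvd (by norm_num) hd
  interval_cases p <;> revert hp hd <;> decide

private lemma coprime18 (p : ℕ) (hp : p.Prime) (h5 : 5 ≤ p) : IsCoprime ((p:ℤ)^2) 18 := by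
  have hpI : Prime (p:ℤ) := Nat.prime_iff_prime_int.mp hp
  refine (hpI.coprime_iff_not_dvd.mpr ?_).pow_left
  intro h
  exact h18 p hp h5 (Int.ofNat_dvd.mp (by exact_mod_cast h))

private lemma key (p : ℕ) (hp : p.Prime) (h5 : 5 ≤ p) (x y : ℤ)
    (hx : (p:ℤ)^2 ∣ 27*x^2+9*x+1) (hy : (p:ℤ)^2 ∣ 27*y^2+9*y+1) :
    (p:ℤ)^2 ∣ (x - y) ∨ (p:ℤ)^2 ∣ (18*x + 18*y + 6) := by
  have hpI : Prime (p:ℤ) := Nat.prime_iff_prime_int.mp hp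
  have hu : (p:ℤ)^2 ∣ (18*x+3)^2+3 := by
    obtain ⟨c, hc⟩ := hx; exact ⟨12*c, by linarith [hc]⟩
  have hv : (p:ℤ)^2 ∣ (18*y+3)^2+3 := by
    obtain ⟨c, hc⟩ := hy; exact ⟨12*c, by linarith [hc]⟩
  have huv : (p:ℤ)^2 ∣ ((18*x+3)-(18*y+3))*((18*x+3)+(18*y+3)) := by
    obtain ⟨c, hc⟩ := hu; obtain ⟨d, hd⟩ := hv
    exact ⟨c - d, by linear_combination hc - hd⟩
  by_cases h1 : (p:ℤ) ∣ ((18*x+3)-(18*y+3))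
  · by_cases h2 : (p:ℤ) ∣ ((18*x+3)+(18*y+3))
    · exfalso
      have hp2 : (p:ℤ) ∣ 2*(18*x+3) := by
        obtain ⟨c, hc⟩ := h1; obtain ⟨d, hd⟩ := h2
        exact ⟨c + d, by linear_combination hc + hd⟩
      have hpu : (p:ℤ) ∣ (18*x+3) := by
        rcases hpI.dvd_mul.mp hp2 with h | h
        · exfalso
          have : (p:ℕ) ∣ 2 := Int.ofNat_dvd.mp (by exact_mod_cast h)
          have := Nat.le_of_dvd (by norm_num) this; omega
        · exact h
      have hp3 : (p:ℤ) ∣ 3 := by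
        have hsq : (p:ℤ) ∣ (18*x+3)^2+3 := dvd_trans (dvd_pow_self _ (by norm_num)) hu
        obtain ⟨c, hc⟩ := hpu; obtain ⟨d, hd⟩ := hsq
        exact ⟨d - p*c^2, by linear_combination hd - (18*x+3+p*c)*hc⟩
      have : (p:ℕ) ∣ 3 := Int.ofNat_dvd.mp (by exact_mod_cast hp3)
      have := Nat.le_of_dvd (by norm_num) this; omega
    · left
      have hco : IsCoprime ((p:ℤ)^2) ((18*x+3)+(18*y+3)) :=
        ((hpI.coprime_iff_not_dvd.mpr h2).pow_left)
      have hd : (p:ℤ)^2 ∣ 18*(x-y) := by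
        have := hco.dvd_of_dvd_mul_right huv
        convert this using 1; rfl; ring
      exact (coprime18 p hp h5).dvd_of_dvd_mul_left hd
  · right
    have hco : IsCoprime ((p:ℤ)^2) ((18*x+3)-(18*y+3)) :=
      ((hpI.coprime_iff_not_dvd.mpr h1).pow_left)
    have := hco.dvd_of_dvd_mul_left huv
    convert this using 1; rfl; ring

private lemma extract (x : ℤ) (h : ¬ Squarefree (27*x^2+9*x+1)) :
    ∃ p : ℕ, p.Prime ∧ 5 ≤ p ∧ (p:ℤ)^2 ∣ (27*x^2+9*x+1) := by
  rw [← Int.squarefree_natAbs, Nat.squarefree_iff_prime_squarefree] at h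
  push_neg at h
  obtain ⟨p, pp, hd⟩ := h
  have hdz : (p:ℤ)^2 ∣ 27*x^2+9*x+1 := by
    have : ((p*p : ℕ) : ℤ) ∣ 27*x^2+9*x+1 := (Int.natCast_dvd).mpr hd
    push_cast at this; convert this using 1; ring
  have hpz : (p:ℤ) ∣ 27*x^2+9*x+1 := dvd_trans (dvd_pow_self _ (by norm_num)) hdz
  have h2 : p ≠ 2 := by
    rintro rfl
    obtain ⟨c, hc⟩ := hpz
    rcases Int.even_or_odd x with ⟨k, rfl⟩ | ⟨k, rfl⟩
    · have h1 : (2:ℤ) ∣ 1 := ⟨c - 54*k^2 - 9*k, by push_cast at hc; linear_combination hc⟩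
      norm_num at h1
    · have h1 : (2:ℤ) ∣ 1 := ⟨c - 54*k^2 - 63*k - 18, by push_cast at hc; linear_combination hc⟩
      norm_num at h1
  have h3 : p ≠ 3 := by
    rintro rfl
    obtain ⟨c, hc⟩ := hpz
    have h1 : (3:ℤ) ∣ 1 := ⟨c - 9*x^2 - 3*x, by push_cast at hc; linear_combination hc⟩
    norm_num at h1
  have h4 : p ≠ 4 := by rintro rfl; exact absurd pp (by decide)
  exact ⟨p, pp, by have := pp.two_le; omega, hdz⟩

private lemma countClass (N M : ℕ) (Q : ℕ → Prop) [DecidablePred Q]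
    (h : ∀ s s', Q s → Q s' → (M:ℤ) ∣ (s:ℤ) - (s':ℤ)) :
    ((Finset.range N).filter Q).card ≤ N / M + 1 := by
  classical
  have : ((Finset.range N).filter Q).card ≤ (Finset.range (N/M + 1)).card := by
    apply Finset.card_le_card_of_injOn (fun s => s / M)
    · intro s hs
      simp only [Finset.coe_filter, Finset.coe_range, Set.mem_setOf_eq, Set.mem_Iio, Finset.mem_filter, Finset.mem_range] at hs ⊢
      exact Nat.lt_succ_of_le (Nat.div_le_div_right hs.1.le)
    · intro s hs s' hs' hdiv
      simp only [Finset.coe_filter, Set.mem_setOf_eq, Finset.mem_range] at hs hs'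
      have hdiv' : s / M = s' / M := hdiv
      have hd := h s s' hs.2 hs'.2
      have hmod : s % M = s' % M := by
        have hme : (s':ℤ) % M = (s:ℤ) % M := Int.modEq_iff_dvd.mpr hd
        exact_mod_cast hme.symm
      rw [← Nat.div_add_mod s M, ← Nat.div_add_mod s' M, hdiv', hmod]
  simpa using this

private lemma sumInv (M : ℕ) (hM4 : 4 ≤ M) :
    ∑ n ∈ Finset.Icc 5 M, (1:ℚ)/(n:ℚ)^2 ≤ 1/4 - 1/(M:ℚ) := by
  induction M, hM4 using Nat.le_induction with
  | base => norm_num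
  | succ M hM ih =>
    rw [Finset.sum_Icc_succ_top (by omega : 5 ≤ M + 1)]
    have hM0 : (0:ℚ) < M := by exact_mod_cast (by omega : 0 < M)
    have hM1 : (0:ℚ) < (M:ℚ) + 1 := by linarith
    have hstep : (1:ℚ)/((M:ℚ)+1)^2 ≤ 1/(M:ℚ) - 1/((M:ℚ)+1) := by
      rw [div_sub_div _ _ (ne_of_gt hM0) (ne_of_gt hM1),
        div_le_div_iff₀ (by positivity) (by positivity)]
      nlinarith
    push_cast
    linarith

set_option maxHeartbeats 1000000 in
private lemma main_count (m N : ℕ) (T : ℤ) (hm1000 : 1000 ≤ m) (hNeq : N = 2^(2*m))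
    (hT0 : 0 ≤ T) (hTN : T ≤ (N:ℤ))
    (hcon : ∀ s : ℕ, s < N → ¬ Squarefree (27*((T:ℤ)+s)^2+9*((T:ℤ)+s)+1)) : False := by
  classical
  have hN1 : 1 ≤ N := by rw [hNeq]; exact Nat.one_le_two_pow
  have hgbound : ∀ s : ℕ, s < N → 27*((T:ℤ)+s)^2+9*((T:ℤ)+s)+1 ≤ 144*(N:ℤ)^2 := by
    intro s hs
    have hs' : (s:ℤ) < N := by exact_mod_cast hs
    have h0 : (0:ℤ) ≤ T + s := by positivity
    have h2 : (T:ℤ) + s ≤ 2*N := by omega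
    have hN1' : (1:ℤ) ≤ N := by exact_mod_cast hN1
    nlinarith
  -- the prime sets
  set P : Finset ℕ := (Finset.range (12*N+1)).filter (fun p => p.Prime ∧ 5 ≤ p) with hP
  set Tp : ℕ → Finset ℕ := fun p =>
    (Finset.range N).filter (fun s => (p:ℤ)^2 ∣ (27*((T:ℤ)+s)^2+9*((T:ℤ)+s)+1)) with hTp
  -- cover
  have hbad : ∀ s ∈ Finset.range N, ∃ p ∈ P, s ∈ Tp p := by
    intro s hs
    rw [Finset.mem_range] at hs
    obtain ⟨p, pp, h5, hdvd⟩ := extract _ (hcon s hs)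
    have hple : p ≤ 12*N := by
      have hsq : (p:ℤ)^2 ≤ 144*(N:ℤ)^2 :=
        le_trans (Int.le_of_dvd (fpos _) hdvd) (hgbound s hs)
      have hsqn : p^2 ≤ (12*N)^2 := by
        have : ((p^2 : ℕ):ℤ) ≤ (((12*N)^2 : ℕ):ℤ) := by push_cast; linarith
        exact_mod_cast this
      exact (Nat.pow_le_pow_iff_left (by norm_num)).mp hsqn
    refine ⟨p, ?_, ?_⟩
    · rw [hP, Finset.mem_filter, Finset.mem_range]; exact ⟨by omega, pp, h5⟩
    · rw [hTp]; simp only [Finset.mem_filter, Finset.mem_range]; exact ⟨hs, hdvd⟩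
  have hcover : Finset.range N ⊆ P.biUnion Tp := by
    intro s hs
    obtain ⟨p, hp, hsp⟩ := hbad s hs
    exact Finset.mem_biUnion.mpr ⟨p, hp, hsp⟩
  have hcount : N ≤ ∑ p ∈ P, (Tp p).card := by
    calc N = (Finset.range N).card := (Finset.card_range N).symm
    _ ≤ (P.biUnion Tp).card := Finset.card_le_card hcover
    _ ≤ ∑ p ∈ P, (Tp p).card := Finset.card_biUnion_le
  -- per prime bound
  have hTpcard : ∀ p ∈ P, (Tp p).card ≤ 2*(N/p^2 + 1) := by
    intro p hp
    rw [hP, Finset.mem_filter] at hp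
    obtain ⟨-, pp, h5⟩ := hp
    rcases Finset.eq_empty_or_nonempty (Tp p) with he | ⟨s₀, hs₀⟩
    · rw [he]; simp
    · rw [hTp, Finset.mem_filter] at hs₀
      obtain ⟨-, hd₀⟩ := hs₀
      set Q1 : ℕ → Prop := fun s => (p:ℤ)^2 ∣ ((s:ℤ) - (s₀:ℤ)) with hQ1
      set Q2 : ℕ → Prop := fun s => (p:ℤ)^2 ∣ (18*(s:ℤ) + (36*T + 18*(s₀:ℤ) + 6)) with hQ2
      have hsplit : Tp p ⊆ (Finset.range N).filter Q1 ∪ (Finset.range N).filter Q2 := by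
        intro s hs
        rw [hTp, Finset.mem_filter] at hs
        obtain ⟨hsr, hd⟩ := hs
        rcases key p pp h5 (T + s) (T + s₀) hd hd₀ with h | h
        · apply Finset.mem_union_left
          rw [Finset.mem_filter]
          refine ⟨hsr, ?_⟩
          rw [hQ1]
          convert h using 1; ring
        · apply Finset.mem_union_right
          rw [Finset.mem_filter]
          refine ⟨hsr, ?_⟩
          rw [hQ2]
          convert h using 1; ring
      have hc1 : ((Finset.range N).filter Q1).card ≤ N/p^2 + 1 := by
        have := countClass N (p^2) Q1 (fun s s' h1 h2 => by
          have hd : (p:ℤ)^2 ∣ ((s:ℤ) - s₀) - ((s':ℤ) - s₀) := dvd_sub h1 h2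
          have : (p:ℤ)^2 ∣ (s:ℤ) - (s':ℤ) := by convert hd using 1; ring
          exact_mod_cast (by push_cast; exact this : ((p^2:ℕ):ℤ) ∣ (s:ℤ) - (s':ℤ)))
        exact this
      have hc2 : ((Finset.range N).filter Q2).card ≤ N/p^2 + 1 := by
        have := countClass N (p^2) Q2 (fun s s' h1 h2 => by
          have hd : (p:ℤ)^2 ∣ 18*((s:ℤ) - (s':ℤ)) := by
            have := dvd_sub h1 h2
            convert this using 1; rfl; ring
          have : (p:ℤ)^2 ∣ (s:ℤ) - (s':ℤ) := (coprime18 p pp h5).dvd_of_dvd_mul_left hd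
          exact_mod_cast (by push_cast; exact this : ((p^2:ℕ):ℤ) ∣ (s:ℤ) - (s':ℤ)))
        exact this
      calc (Tp p).card ≤ ((Finset.range N).filter Q1 ∪ (Finset.range N).filter Q2).card :=
            Finset.card_le_card hsplit
      _ ≤ ((Finset.range N).filter Q1).card + ((Finset.range N).filter Q2).card :=
            Finset.card_union_le _ _
      _ ≤ 2*(N/p^2 + 1) := by omega
  -- split into small and large primes
  set R : ℕ := 2^m with hR
  have hNR : N = R^2 := by rw [hNeq, hR, ← pow_mul, Nat.mul_comm]
  set Ps : Finset ℕ := P.filter (fun p => p ≤ R) with hPs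
  set Pl : Finset ℕ := P.filter (fun p => ¬ p ≤ R) with hPl
  have hsum_split : ∑ p ∈ P, (Tp p).card
      = ∑ p ∈ Ps, (Tp p).card + ∑ p ∈ Pl, (Tp p).card := by
    rw [hPs, hPl, Finset.sum_filter_add_sum_filter_not]
  -- large primes: each Tp has card ≤ 2
  have hlarge_each : ∀ p ∈ Pl, (Tp p).card ≤ 2 := by
    intro p hp
    rw [hPl, Finset.mem_filter] at hp
    obtain ⟨hpP, hpR⟩ := hp
    have h1 := hTpcard p hpP
    have hdiv0 : N / p^2 = 0 := by
      apply Nat.div_eq_of_lt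
      rw [hNR]
      exact Nat.pow_lt_pow_left (by omega) (by norm_num)
    omega
  have hlarge : ∑ p ∈ Pl, (Tp p).card ≤ 2 * Pl.card := by
    calc ∑ p ∈ Pl, (Tp p).card ≤ ∑ _p ∈ Pl, 2 := Finset.sum_le_sum hlarge_each
    _ = 2 * Pl.card := by rw [Finset.sum_const, smul_eq_mul, Nat.mul_comm]
  -- primorial bound on Pl.card
  have hPlcard : m * Pl.card ≤ 24 * N := by
    have hsub : Pl ⊆ (Finset.range (12*N+1)).filter Nat.Prime := by
      intro p hp
      rw [hPl, Finset.mem_filter, hP, Finset.mem_filter] at hp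
      rw [Finset.mem_filter]
      exact ⟨hp.1.1, hp.1.2.1⟩
    have hprod1 : R ^ Pl.card ≤ ∏ p ∈ Pl, p := by
      apply Finset.pow_card_le_prod
      intro p hp
      rw [hPl, Finset.mem_filter] at hp
      omega
    have hprod2 : ∏ p ∈ Pl, p ≤ primorial (12*N) := by
      apply Finset.prod_le_prod_of_subset_of_one_le' hsub
      intro p hp _
      rw [Finset.mem_filter] at hp
      exact hp.2.two_le.trans' (by norm_num)
    have hprim := primorial_le_4_pow (12*N)
    have hchain : 2 ^ (m * Pl.card) ≤ 2 ^ (24 * N) := by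
      calc 2 ^ (m * Pl.card) = R ^ Pl.card := by rw [hR, pow_mul]
      _ ≤ primorial (12*N) := le_trans hprod1 hprod2
      _ ≤ 4 ^ (12*N) := hprim
      _ = 2 ^ (24*N) := by
          rw [show (4:ℕ) = 2^2 by norm_num, ← pow_mul]
          ring_nf
    exact (Nat.pow_le_pow_iff_right (by norm_num)).mp hchain
  -- small primes
  have hPsIcc : Ps ⊆ Finset.Icc 5 R := by
    intro p hp
    rw [hPs, Finset.mem_filter, hP, Finset.mem_filter] at hp
    rw [Finset.mem_Icc]
    exact ⟨hp.1.2.2, hp.2⟩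
  have hPscard : Ps.card ≤ R := by
    have h1 : Ps.card ≤ (Finset.Icc 5 R).card := Finset.card_le_card hPsIcc
    have h2 : (Finset.Icc 5 R).card = R + 1 - 5 := Nat.card_Icc 5 R
    rw [h2] at h1
    exact h1.trans (by apply Nat.sub_le_of_le_add; exact Nat.add_le_add_left (by norm_num) R)
  have hR4 : 4 ≤ R := by
    rw [hR]
    calc (4:ℕ) = 2^2 := by norm_num
    _ ≤ 2^m := Nat.pow_le_pow_right (by norm_num) (by omega)
  have hsmall_sum : ∑ p ∈ Ps, (1:ℚ)/(p:ℚ)^2 ≤ 1/4 := by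
    have h1 : ∑ p ∈ Ps, (1:ℚ)/(p:ℚ)^2 ≤ ∑ n ∈ Finset.Icc 5 R, (1:ℚ)/(n:ℚ)^2 := by
      apply Finset.sum_le_sum_of_subset_of_nonneg hPsIcc
      intro n _ _
      positivity
    have h2 := sumInv R hR4
    have h3 : (0:ℚ) ≤ 1/(R:ℚ) := by positivity
    linarith
  -- now the rational estimate
  have hterm : ∀ p ∈ Ps, ((Tp p).card : ℚ) ≤ 2*(N:ℚ)*(1/(p:ℚ)^2) + 2 := by
    intro p hp
    rw [hPs, Finset.mem_filter] at hp
    have h1 := hTpcard p hp.1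
    have h2 : ((Tp p).card : ℚ) ≤ ((2*(N/p^2+1) : ℕ) : ℚ) := by exact_mod_cast h1
    have h3 : (((N/p^2 : ℕ) : ℚ)) ≤ (N:ℚ)/((p^2 : ℕ):ℚ) := Nat.cast_div_le
    have h4 : ((p^2 : ℕ):ℚ) = (p:ℚ)^2 := by push_cast; ring
    rw [h4] at h3
    have h5 : ((2*(N/p^2+1) : ℕ) : ℚ) = 2*((N/p^2 : ℕ):ℚ) + 2 := by push_cast; ring
    rw [h5] at h2
    have h6 : 2*(N:ℚ)*(1/(p:ℚ)^2) = 2*((N:ℚ)/(p:ℚ)^2) := by ring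
    rw [h6]
    linarith
  have hsmall : (∑ p ∈ Ps, ((Tp p).card:ℚ)) ≤ (N:ℚ)/2 + 2*R := by
    calc (∑ p ∈ Ps, ((Tp p).card:ℚ)) ≤ ∑ p ∈ Ps, (2*(N:ℚ)*(1/(p:ℚ)^2) + 2) :=
          Finset.sum_le_sum hterm
    _ = 2*(N:ℚ)*(∑ p ∈ Ps, 1/(p:ℚ)^2) + 2*Ps.card := by
          rw [Finset.sum_add_distrib, ← Finset.mul_sum, Finset.sum_const]
          ring
    _ ≤ 2*(N:ℚ)*(1/4) + 2*R := by
          have hN0 : (0:ℚ) ≤ 2*(N:ℚ) := by positivity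
          have := mul_le_mul_of_nonneg_left hsmall_sum hN0
          have hc : (Ps.card : ℚ) ≤ (R:ℚ) := by exact_mod_cast hPscard
          linarith
    _ = (N:ℚ)/2 + 2*R := by ring
  -- combine
  have hNQ : (N:ℚ) ≤ ∑ p ∈ P, ((Tp p).card:ℚ) := by exact_mod_cast hcount
  have hsplitQ : ∑ p ∈ P, ((Tp p).card:ℚ)
      = ∑ p ∈ Ps, ((Tp p).card:ℚ) + ∑ p ∈ Pl, ((Tp p).card:ℚ) := by
    exact_mod_cast congrArg (Nat.cast : ℕ → ℚ) hsum_split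
  have hlargeQ : ∑ p ∈ Pl, ((Tp p).card:ℚ) ≤ 2*(Pl.card:ℚ) := by exact_mod_cast hlarge
  have hPlQ : 2*(Pl.card:ℚ) ≤ 48*(N:ℚ)/1000 := by
    have h1 : (m:ℚ) * Pl.card ≤ 24*(N:ℚ) := by exact_mod_cast hPlcard
    have hm0 : (1000:ℚ) ≤ (m:ℚ) := by exact_mod_cast hm1000
    have hc0 : (0:ℚ) ≤ (Pl.card:ℚ) := Nat.cast_nonneg _
    nlinarith
  have hRQ : 2*(R:ℚ) ≤ (N:ℚ)/8 := by
    have h1 : 2^(m+4) ≤ 2^(2*m) := Nat.pow_le_pow_right (by norm_num) (by omega)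
    have h2 : 16 * R ≤ N := by
      rw [hR, hNeq]
      calc 16 * 2^m = 2^(m+4) := by ring
      _ ≤ 2^(2*m) := h1
    have h3 : (16:ℚ)*(R:ℚ) ≤ (N:ℚ) := by exact_mod_cast h2
    linarith
  have hN1Q : (1:ℚ) ≤ (N:ℚ) := by exact_mod_cast hN1
  linarith

private lemma exists_squarefree_ge (B : ℤ) :
    ∃ t : ℤ, B ≤ t ∧ Squarefree (27*t^2+9*t+1) := by
  by_contra hcon
  push_neg at hcon
  refine main_count (max 1000 (max B 0).toNat) (2^(2*(max 1000 (max B 0).toNat)))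
    (max B 0) (le_max_left _ _) rfl (le_max_right _ _) ?_ ?_
  · -- T ≤ N
    have h1 : (max B 0).toNat ≤ max 1000 (max B 0).toNat := le_max_right _ _
    have h2 : ((max B 0).toNat : ℤ) = max B 0 := Int.toNat_of_nonneg (le_max_right _ _)
    have h3 : max 1000 (max B 0).toNat ≤ 2^(2*(max 1000 (max B 0).toNat)) :=
      le_of_lt (lt_of_lt_of_le Nat.lt_two_pow_self
        (Nat.pow_le_pow_right (by norm_num) (by omega)))
    have h4 : ((max 1000 (max B 0).toNat : ℕ) : ℤ) ≤ ((2^(2*(max 1000 (max B 0).toNat)) : ℕ) : ℤ) := by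
      exact_mod_cast h3
    omega
  · intro s _ hsq
    have h0 : (0:ℤ) ≤ (s:ℤ) := by positivity
    have hB : B ≤ max B 0 := le_max_left _ _
    exact hcon (max B 0 + s) (by omega) hsq

theorem infinitely_many_squarefree :
    {t : ℤ | Squarefree (27*t^2 + 9*t + 1)}.Infinite ∧
    {a : ℤ | a ≡ 3 [ZMOD 27] ∧ Squarefree ((a^2 + 3*a + 9)/27)}.Infinite := by
  have h1 : {t : ℤ | Squarefree (27*t^2 + 9*t + 1)}.Infinite := by
    intro hfin
    obtain ⟨C, hC⟩ := hfin.bddAbove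
    obtain ⟨t, ht, hsq⟩ := exists_squarefree_ge (C + 1)
    have := hC hsq
    omega
  refine ⟨h1, ?_⟩
  have h2 : (fun t : ℤ => 27*t + 3) '' {t : ℤ | Squarefree (27*t^2 + 9*t + 1)} ⊆
      {a : ℤ | a ≡ 3 [ZMOD 27] ∧ Squarefree ((a^2 + 3*a + 9)/27)} := by
    rintro a ⟨t, ht, rfl⟩
    constructor
    · show Int.ModEq 27 (27*t+3) 3
      have : (27:ℤ) ∣ 3 - (27*t+3) := ⟨-t, by ring⟩
      exact (Int.modEq_iff_dvd).mpr this
    · have hdiv : ((27*t+3)^2 + 3*(27*t+3) + 9)/27 = 27*t^2 + 9*t + 1 := by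
        have : (27*t+3)^2 + 3*(27*t+3) + 9 = 27 * (27*t^2 + 9*t + 1) := by ring
        rw [this, Int.mul_ediv_cancel_left _ (by norm_num)]
      rw [hdiv]
      exact ht
  exact Set.Infinite.mono h2 (Set.Infinite.image
    (fun x _ y _ h => by omega) h1)
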